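/- Let T = (T_{1,s})_{s≤n₁}, (T_{2,t})_{t≤n₂} be two families of operators on H that are doubly Λ-commuting: T_{1,s}* T_{2,t} = conj(λ_{st}) T_{2,t} T_{1,s}* and T_{1,s} T_{2,t} = λ_{st} T_{2,t} T_{1,s} for unimodular λ_{st}, and suppose each row is a contraction: ∑_s T_{i,s} T_{i,s}* ≤ 1 for i = 1, 2. Then (id − Φ_1)((id − Φ_2)(1)) = (1 − ∑_s T_{1,s} T_{1,s}*)(1 − ∑_t T_{2,t} T_{2,t}*) ≥ 0, where Φ_i(X) := ∑ T_{i,s} X T_{i,s}*. -/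

import Mathlib

open ContinuousLinearMap

open Polynomial in
lemma my_commute_cfc {A : Type*} [TopologicalSpace A] [Ring A] [StarRing A] [Algebra ℝ A]
    [IsTopologicalRing A] [T2Space A]
    [ContinuousFunctionalCalculus ℝ A (IsSelfAdjoint : A → Prop)]
    {a b : A} (ha : IsSelfAdjoint a) (hab : Commute b a) (f : ℝ → ℝ) :
    Commute b (cfc f a) := by
  by_cases hf : ContinuousOn f (spectrum ℝ a)
  · rw [cfc_apply f a ha hf]
    set S : Subalgebra ℝ C(spectrum ℝ a, ℝ) :=
      (Subalgebra.centralizer ℝ {b}).comap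
        ((cfcHom ha (R := ℝ)) : C(spectrum ℝ a, ℝ) →⋆ₐ[ℝ] A).toAlgHom with hS
    have hSclosed : IsClosed (S : Set C(spectrum ℝ a, ℝ)) := by
      have hset : (S : Set C(spectrum ℝ a, ℝ)) =
          (cfcHom ha (R := ℝ)) ⁻¹' {x | b * x = x * b} := by
        ext g
        simp [hS, Subalgebra.mem_comap, Subalgebra.mem_centralizer_iff,
          Set.mem_centralizer_iff, eq_comm]
      rw [hset]
      exact (isClosed_eq (by fun_prop) (by fun_prop)).preimage (cfcHom_continuous ha)
    have hle : polynomialFunctions (spectrum ℝ a) ≤ S := by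
      rw [polynomialFunctions.eq_adjoin_X]
      apply Algebra.adjoin_le
      rintro x hx
      rw [Set.mem_singleton_iff] at hx
      subst hx
      simp only [SetLike.mem_coe, Subalgebra.mem_comap, Subalgebra.mem_centralizer_iff]
      intro y hy
      rw [Set.mem_singleton_iff] at hy
      rw [hy]
      show b * cfcHom ha _ = cfcHom ha _ * b
      rw [toContinuousMapOnAlgHom_apply, toContinuousMapOn_X_eq_restrict_id, cfcHom_id ha]
      exact hab
    have _inst : CompactSpace (spectrum ℝ a) :=
      ContinuousFunctionalCalculus.compactSpace_spectrum (p := (IsSelfAdjoint : A → Prop)) a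
    have htop : (⊤ : Subalgebra ℝ C(spectrum ℝ a, ℝ)) ≤ S := by
      rw [← polynomialFunctions.topologicalClosure]
      exact Subalgebra.topologicalClosure_minimal hle hSclosed
    have hmem := htop (Algebra.mem_top (x := ⟨_, hf.restrict⟩))
    rw [hS, Subalgebra.mem_comap, Subalgebra.mem_centralizer_iff] at hmem
    exact hmem b rfl
  · rw [cfc_apply_of_not_continuousOn a hf]
    exact Commute.zero_right b

lemma my_mul_nonneg {A : Type*} [CStarAlgebra A] [PartialOrder A] [StarOrderedRing A]
    {a b : A} (ha : 0 ≤ a) (hb : 0 ≤ b) (hab : Commute a b) : 0 ≤ a * b := by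
  have ha' : IsSelfAdjoint a := IsSelfAdjoint.of_nonneg ha
  have hs_sa : IsSelfAdjoint (cfc Real.sqrt a) := cfc_predicate _ a
  have hss : cfc Real.sqrt a * cfc Real.sqrt a = a := by
    rw [← cfc_mul Real.sqrt Real.sqrt a (by fun_prop) (by fun_prop)]
    calc cfc (fun x => Real.sqrt x * Real.sqrt x) a
        = cfc (id : ℝ → ℝ) a := by
          apply cfc_congr
          intro x hx
          exact Real.mul_self_sqrt (spectrum_nonneg_of_nonneg ha hx)
      _ = a := cfc_id ℝ a
  have hcomm : Commute b (cfc Real.sqrt a) := my_commute_cfc ha' hab.symm Real.sqrt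
  calc (0 : A) ≤ star (cfc Real.sqrt a) * b * cfc Real.sqrt a := star_left_conjugate_nonneg hb _
    _ = cfc Real.sqrt a * (b * cfc Real.sqrt a) := by rw [hs_sa.star_eq, mul_assoc]
    _ = cfc Real.sqrt a * (cfc Real.sqrt a * b) := by rw [hcomm]
    _ = a * b := by rw [← mul_assoc, hss]

theorem stmt11 {H : Type*} [NormedAddCommGroup H] [InnerProductSpace ℂ H] [CompleteSpace H]
    (n₁ n₂ : ℕ) (T₁ : Fin n₁ → H →L[ℂ] H) (T₂ : Fin n₂ → H →L[ℂ] H)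
    (lam : Fin n₁ → Fin n₂ → ℂ) (hlam : ∀ s t, ‖lam s t‖ = 1)
    (h1 : ∀ s t, adjoint (T₁ s) * T₂ t = (starRingEnd ℂ) (lam s t) • (T₂ t * adjoint (T₁ s)))
    (h2 : ∀ s t, T₁ s * T₂ t = lam s t • (T₂ t * T₁ s))
    (hrow1 : ((1 : H →L[ℂ] H) - ∑ s, T₁ s * adjoint (T₁ s)).IsPositive)
    (hrow2 : ((1 : H →L[ℂ] H) - ∑ t, T₂ t * adjoint (T₂ t)).IsPositive) :
    (((1 : H →L[ℂ] H) - ∑ t, T₂ t * adjoint (T₂ t)) -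
        ∑ s, T₁ s * ((1 : H →L[ℂ] H) - ∑ t, T₂ t * adjoint (T₂ t)) * adjoint (T₁ s)) =
      ((1 : H →L[ℂ] H) - ∑ s, T₁ s * adjoint (T₁ s)) *
        ((1 : H →L[ℂ] H) - ∑ t, T₂ t * adjoint (T₂ t)) ∧
    (((1 : H →L[ℂ] H) - ∑ s, T₁ s * adjoint (T₁ s)) *
        ((1 : H →L[ℂ] H) - ∑ t, T₂ t * adjoint (T₂ t))).IsPositive := by
  -- unimodularity
  have hunim : ∀ s t, (starRingEnd ℂ) (lam s t) * lam s t = 1 := by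
    intro s t
    rw [Complex.conj_mul']
    norm_cast
    simp [hlam s t]
  have hunim2 : ∀ s t, lam s t * (starRingEnd ℂ) (lam s t) = 1 := by
    intro s t
    rw [mul_comm]
    exact hunim s t
  -- rewrite adjoint as star
  simp only [← star_eq_adjoint] at h1 h2 hrow1 hrow2 ⊢
  set P₁ : H →L[ℂ] H := ∑ s, T₁ s * star (T₁ s) with hP₁
  set P₂ : H →L[ℂ] H := ∑ t, T₂ t * star (T₂ t) with hP₂
  -- derived commutation relations
  have hi : ∀ s t, star (T₂ t) * star (T₁ s)
      = (starRingEnd ℂ) (lam s t) • (star (T₁ s) * star (T₂ t)) := by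
    intro s t
    have := congrArg star (h2 s t)
    simpa [star_mul, star_smul] using this
  have hii : ∀ s t, star (T₂ t) * T₁ s = lam s t • (T₁ s * star (T₂ t)) := by
    intro s t
    have := congrArg star (h1 s t)
    simpa [star_mul, star_smul] using this
  have hii' : ∀ s t, T₁ s * star (T₂ t)
      = (starRingEnd ℂ) (lam s t) • (star (T₂ t) * T₁ s) := by
    intro s t
    rw [hii s t, smul_smul, hunim s t, one_smul]
  -- three expressions equal to M = T₂t * T₁s * star T₁s * star T₂t
  have E1 : ∀ s t, T₁ s * (T₂ t * star (T₂ t)) * star (T₁ s)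
      = T₂ t * T₁ s * star (T₁ s) * star (T₂ t) := by
    intro s t
    calc T₁ s * (T₂ t * star (T₂ t)) * star (T₁ s)
        = (T₁ s * T₂ t) * (star (T₂ t) * star (T₁ s)) := by noncomm_ring
      _ = (lam s t • (T₂ t * T₁ s)) * ((starRingEnd ℂ) (lam s t) • (star (T₁ s) * star (T₂ t))) := by
          rw [h2 s t, hi s t]
      _ = (lam s t * (starRingEnd ℂ) (lam s t)) • ((T₂ t * T₁ s) * (star (T₁ s) * star (T₂ t))) := by
          rw [smul_mul_smul_comm]
      _ = T₂ t * T₁ s * star (T₁ s) * star (T₂ t) := by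
          rw [hunim2 s t, one_smul]; noncomm_ring
  have E2 : ∀ s t, (T₂ t * star (T₂ t)) * (T₁ s * star (T₁ s))
      = T₂ t * T₁ s * star (T₁ s) * star (T₂ t) := by
    intro s t
    calc (T₂ t * star (T₂ t)) * (T₁ s * star (T₁ s))
        = T₂ t * (star (T₂ t) * T₁ s) * star (T₁ s) := by noncomm_ring
      _ = T₂ t * (lam s t • (T₁ s * star (T₂ t))) * star (T₁ s) := by rw [hii s t]
      _ = lam s t • (T₂ t * T₁ s * (star (T₂ t) * star (T₁ s))) := by
          simp only [mul_smul_comm, smul_mul_assoc]; noncomm_ring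
      _ = lam s t • (T₂ t * T₁ s * ((starRingEnd ℂ) (lam s t) • (star (T₁ s) * star (T₂ t)))) := by
          rw [hi s t]
      _ = T₂ t * T₁ s * star (T₁ s) * star (T₂ t) := by
          simp only [mul_smul_comm, smul_smul, hunim2 s t, one_smul]; noncomm_ring
  have E3 : ∀ s t, (T₁ s * star (T₁ s)) * (T₂ t * star (T₂ t))
      = T₂ t * T₁ s * star (T₁ s) * star (T₂ t) := by
    intro s t
    calc (T₁ s * star (T₁ s)) * (T₂ t * star (T₂ t))
        = T₁ s * (star (T₁ s) * T₂ t) * star (T₂ t) := by noncomm_ring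
      _ = T₁ s * ((starRingEnd ℂ) (lam s t) • (T₂ t * star (T₁ s))) * star (T₂ t) := by
          rw [h1 s t]
      _ = (starRingEnd ℂ) (lam s t) • ((T₁ s * T₂ t) * (star (T₁ s) * star (T₂ t))) := by
          simp only [mul_smul_comm, smul_mul_assoc]; noncomm_ring
      _ = (starRingEnd ℂ) (lam s t) • ((lam s t • (T₂ t * T₁ s)) * (star (T₁ s) * star (T₂ t))) := by
          rw [h2 s t]
      _ = T₂ t * T₁ s * star (T₁ s) * star (T₂ t) := by
          simp only [smul_mul_assoc, smul_smul, hunim s t, one_smul]; noncomm_ring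
  -- commutation of P₁ and P₂
  have hPcomm : P₁ * P₂ = P₂ * P₁ := by
    rw [hP₁, hP₂, Finset.sum_mul_sum, Finset.sum_mul_sum]
    rw [Finset.sum_comm]
    apply Finset.sum_congr rfl
    intro t _
    apply Finset.sum_congr rfl
    intro s _
    rw [E3 s t, E2 s t]
  -- the sum Φ₁(D₂)
  have hsum : ∑ s, T₁ s * ((1 : H →L[ℂ] H) - P₂) * star (T₁ s) = P₁ - P₂ * P₁ := by
    have : ∀ s, T₁ s * ((1 : H →L[ℂ] H) - P₂) * star (T₁ s)
        = T₁ s * star (T₁ s) - ∑ t, (T₂ t * star (T₂ t)) * (T₁ s * star (T₁ s)) := by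
      intro s
      rw [mul_sub, sub_mul, mul_one]
      congr 1
      rw [hP₂, Finset.mul_sum, Finset.sum_mul]
      exact Finset.sum_congr rfl fun t _ => (E1 s t).trans (E2 s t).symm
    rw [Finset.sum_congr rfl fun s _ => this s, Finset.sum_sub_distrib, ← hP₁]
    congr 1
    rw [hP₂, hP₁, Finset.sum_mul_sum]
    exact Finset.sum_comm
  constructor
  · have hexp : ((1 : H →L[ℂ] H) - P₁) * (1 - P₂) = 1 - P₂ - P₁ + P₁ * P₂ := by
      noncomm_ring
    rw [hsum, hexp, hPcomm]
    abel
  · have hd1 : (0 : H →L[ℂ] H) ≤ 1 - P₁ := (nonneg_iff_isPositive _).mpr hrow1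
    have hd2 : (0 : H →L[ℂ] H) ≤ 1 - P₂ := (nonneg_iff_isPositive _).mpr hrow2
    have hcomm : Commute ((1 : H →L[ℂ] H) - P₁) (1 - P₂) := by
      show _ = _
      simp only [sub_mul, mul_sub, one_mul, mul_one, hPcomm]
      abel
    exact (nonneg_iff_isPositive _).mp (my_mul_nonneg hd1 hd2 hcomm)
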